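/- (Dyson's conjecture) Let a_0, a_1, …, a_n be nonnegative integers. Then CT_x ∏_{0≤i≠j≤n} (1 − x_i/x_j)^{a_i} = (a_0 + a_1 + ⋯ + a_n)! / (a_0! · a_1! ⋯ a_n!), where the product is over all ordered pairs (i,j) with 0 ≤ i, j ≤ n and i ≠ j. -/

import Mathlib

open Finset

noncomputable section

/-- Laurent polynomials in the variables `x_0,…,x_n` over `ℚ`. -/
abbrev LP (N : ℕ) : Type := AddMonoidAlgebra ℚ (Fin N →₀ ℤ)

def Xp {N : ℕ} (i : Fin N) : LP N := AddMonoidAlgebra.single (Finsupp.single i 1) 1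

def Xi {N : ℕ} (i : Fin N) : LP N := AddMonoidAlgebra.single (Finsupp.single i (-1)) 1

/-- The constant term: the coefficient of `x_0^0 ⋯ x_n^0`. -/
def CT {N : ℕ} (F : LP N) : ℚ := F.coeff 0


variable {N : ℕ}

lemma Xp_mul_Xi (i : Fin N) : Xp i * Xi i = 1 := by
  rw [Xp, Xi, AddMonoidAlgebra.single_mul_single]
  simp [AddMonoidAlgebra.one_def]

lemma isUnit_Xp (i : Fin N) : IsUnit (Xp i) := IsUnit.of_mul_eq_one _ (Xp_mul_Xi i)

lemma Xp_mul_Xi' (i j : Fin N) :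
    Xp i * Xi j = AddMonoidAlgebra.single (Finsupp.single i 1 + Finsupp.single j (-1)) 1 := by
  rw [Xp, Xi, AddMonoidAlgebra.single_mul_single, mul_one]

lemma XpXi_factor (i j : Fin N) : Xp j - Xp i = Xp j * (1 - Xp i * Xi j) := by
  rw [mul_sub, mul_one]
  congr 1
  rw [mul_comm (Xp i), ← mul_assoc, Xp_mul_Xi, one_mul]

/-- key coefficient lemma -/
lemma mul_apply_zero (F G : LP N)
    (h : ∀ d ∈ F.coeff.support, ∀ e ∈ G.coeff.support, d + e = 0 → d = 0 ∧ e = 0) :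
    (F * G).coeff 0 = F.coeff 0 * G.coeff 0 := by
  classical
  rw [AddMonoidAlgebra.coeff_mul]
  simp only [Finsupp.sum]
  have : ∀ d ∈ F.coeff.support, (∑ e ∈ G.coeff.support, if d + e = 0 then F.coeff d * G.coeff e else 0)
      = if d = 0 then F.coeff d * G.coeff 0 else 0 := by
    intro d hd
    by_cases hd0 : d = 0
    · subst hd0
      simp only [if_true, zero_add]
      rw [Finset.sum_ite_eq' G.coeff.support 0 (fun e => F.coeff 0 * G.coeff e)]
      by_cases h0 : (0 : Fin N →₀ ℤ) ∈ G.coeff.support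
      · simp [h0]
      · simp [h0, Finsupp.notMem_support_iff.mp h0]
    · rw [if_neg hd0]
      apply Finset.sum_eq_zero
      intro e he
      rw [if_neg]
      intro hde
      exact hd0 (h d hd e he hde).1
  rw [Finset.sum_congr rfl this, Finset.sum_ite_eq' F.coeff.support 0 (fun d => F.coeff d * G.coeff 0)]
  by_cases h0 : (0 : Fin N →₀ ℤ) ∈ F.coeff.support
  · simp [h0]
  · simp [h0, Finsupp.notMem_support_iff.mp h0]

/-- `F` does not involve the variable `x_k`. -/
def KF (k : Fin N) (F : LP N) : Prop := ∀ e ∈ F.coeff.support, e k = 0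

lemma KF_one (k : Fin N) : KF k (1 : LP N) := by
  intro e he
  rw [AddMonoidAlgebra.one_def] at he
  have := Finsupp.support_single_subset he
  simp only [Finset.mem_singleton] at this
  simp [this]

lemma KF_mul {k : Fin N} {F G : LP N} (hF : KF k F) (hG : KF k G) : KF k (F * G) := by
  intro e he
  have := AddMonoidAlgebra.support_coeff_mul_subset F G he
  rw [Finset.mem_add] at this
  obtain ⟨d, hd, f, hf, rfl⟩ := this
  simp [hF d hd, hG f hf]

lemma KF_pow {k : Fin N} {F : LP N} (hF : KF k F) (m : ℕ) : KF k (F ^ m) := by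
  induction m with
  | zero => simpa using KF_one k
  | succ m ih => rw [pow_succ]; exact KF_mul ih hF

lemma KF_prod {k : Fin N} {ι : Type*} {s : Finset ι} {f : ι → LP N}
    (h : ∀ i ∈ s, KF k (f i)) : KF k (∏ i ∈ s, f i) := by
  classical
  induction s using Finset.induction_on with
  | empty => simpa using KF_one k
  | insert _ _ hx ih =>
    rw [Finset.prod_insert hx]
    exact KF_mul (h _ (Finset.mem_insert_self _ _))
      (ih fun i hi => h i (Finset.mem_insert_of_mem hi))

lemma KF_factor {k i j : Fin N} (hi : i ≠ k) (hj : j ≠ k) :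
    KF k (1 - Xp i * Xi j) := by
  intro e he
  rw [Xp_mul_Xi'] at he
  have := Finsupp.support_sub (f := (1 : LP N).coeff) he
  rw [Finset.mem_union] at this
  rcases this with h1 | h2
  · exact KF_one k e h1
  · have := Finsupp.support_single_subset h2
    simp only [Finset.mem_singleton] at this
    subst this
    simp [Finsupp.single_apply, hi, hj]

/-- `Q k F`: all monomials of `F` have nonpositive exponent of `x_k`, with zero
exponent only for the constant monomial, and constant coefficient 1. -/
def Q (k : Fin N) (F : LP N) : Prop :=
  (∀ e ∈ F.coeff.support, e k ≤ 0 ∧ (e k = 0 → e = 0)) ∧ F.coeff 0 = 1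

lemma Q_one (k : Fin N) : Q k (1 : LP N) := by
  constructor
  · intro e he
    rw [AddMonoidAlgebra.one_def] at he
    have := Finsupp.support_single_subset he
    simp only [Finset.mem_singleton] at this
    simp [this]
  · simp [AddMonoidAlgebra.one_def, Finsupp.single_apply]

lemma Q_mul {k : Fin N} {F G : LP N} (hF : Q k F) (hG : Q k G) : Q k (F * G) := by
  have key : ∀ d ∈ F.coeff.support, ∀ e ∈ G.coeff.support, d + e = 0 → d = 0 ∧ e = 0 := by
    intro d hd e he hde
    have h1 := (hF.1 d hd).1
    have h2 := (hG.1 e he).1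
    have hdk : d k = 0 ∧ e k = 0 := by
      have : d k + e k = 0 := by
        have := congrArg (fun f => f k) hde
        simpa using this
      omega
    have hd0 : d = 0 := (hF.1 d hd).2 hdk.1
    have he0 : e = 0 := (hG.1 e he).2 hdk.2
    exact ⟨hd0, he0⟩
  constructor
  · intro e he
    have := AddMonoidAlgebra.support_coeff_mul_subset F G he
    rw [Finset.mem_add] at this
    obtain ⟨d, hd, f, hf, rfl⟩ := this
    constructor
    · have := (hF.1 d hd).1; have := (hG.1 f hf).1
      simp only [Finsupp.add_apply]
      omega
    · intro h0
      simp only [Finsupp.add_apply] at h0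
      have h1 := (hF.1 d hd).1
      have h2 := (hG.1 f hf).1
      have : d k = 0 ∧ f k = 0 := by omega
      rw [(hF.1 d hd).2 this.1, (hG.1 f hf).2 this.2, add_zero]
  · rw [mul_apply_zero F G key, hF.2, hG.2, mul_one]

lemma Q_pow {k : Fin N} {F : LP N} (hF : Q k F) (m : ℕ) : Q k (F ^ m) := by
  induction m with
  | zero => simpa using Q_one k
  | succ m ih => rw [pow_succ]; exact Q_mul ih hF

lemma Q_prod {k : Fin N} {ι : Type*} {s : Finset ι} {f : ι → LP N}
    (h : ∀ i ∈ s, Q k (f i)) : Q k (∏ i ∈ s, f i) := by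
  classical
  induction s using Finset.induction_on with
  | empty => simpa using Q_one k
  | insert _ _ hx ih =>
    rw [Finset.prod_insert hx]
    exact Q_mul (h _ (Finset.mem_insert_self _ _))
      (ih fun i hi => h i (Finset.mem_insert_of_mem hi))

lemma Q_factor {k i : Fin N} (hi : i ≠ k) : Q k (1 - Xp i * Xi k) := by
  have hne : (Finsupp.single i 1 + Finsupp.single k (-1) : Fin N →₀ ℤ) k = -1 := by
    simp [Finsupp.single_apply, hi]
  constructor
  · intro e he
    rw [Xp_mul_Xi'] at he
    have := Finsupp.support_sub (f := (1 : LP N).coeff) he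
    rw [Finset.mem_union] at this
    rcases this with h1 | h2
    · have : e = 0 := by
        rw [AddMonoidAlgebra.one_def] at h1
        have := Finsupp.support_single_subset h1
        simpa using this
      simp [this]
    · have := Finsupp.support_single_subset h2
      simp only [Finset.mem_singleton] at this
      subst this
      constructor
      · rw [hne]; omega
      · rw [hne]; omega
  · have h0 : (Finsupp.single i 1 + Finsupp.single k (-1) : Fin N →₀ ℤ) ≠ 0 := by
      intro h
      have := congrArg (fun f => f k) h
      simp [hne] at this
      rw [h] at hne; simp at hne
    rw [Xp_mul_Xi']
    show (1 : LP N).coeff 0 - (AddMonoidAlgebra.single _ 1 : LP N).coeff 0 = 1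
    have h1 : (AddMonoidAlgebra.single (Finsupp.single i 1 + Finsupp.single k (-1)) (1:ℚ) : LP N).coeff 0 = 0 :=
      Finsupp.single_eq_of_ne' h0
    rw [h1, AddMonoidAlgebra.one_def, AddMonoidAlgebra.coeff_single, sub_zero, Finsupp.single_eq_same]

/-- The key constant-term computation. -/
lemma CT_mul_Q {k : Fin N} {G E : LP N} (hG : KF k G) (hE : Q k E) :
    (G * E).coeff 0 = G.coeff 0 := by
  rw [mul_apply_zero]
  · rw [hE.2, mul_one]
  · intro d hd e he hde
    have hdk := hG d hd
    have hek : e k = 0 := by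
      have := congrArg (fun f => f k) hde
      simp only [Finsupp.add_apply, hdk, zero_add] at this
      simpa using this
    have he0 : e = 0 := (hE.1 e he).2 hek
    constructor
    · rw [he0, add_zero] at hde; exact hde
    · exact he0

/-- The set of ordered pairs of distinct elements of `s`. -/
def pairs {ι : Type*} [DecidableEq ι] (s : Finset ι) : Finset (ι × ι) :=
  (s ×ˢ s).filter (fun p => p.1 ≠ p.2)

lemma prod_pairs_fst_eq {ι M : Type*} [DecidableEq ι] [CommMonoid M] (s : Finset ι)
    (i : ι) (hi : i ∈ s) (f : ι × ι → M) :
    ∏ p ∈ (pairs s).filter (fun p => p.1 = i), f p = ∏ j ∈ s.erase i, f (i, j) := by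
  apply Finset.prod_nbij' (fun p => p.2) (fun j => (i, j))
  · intro p hp
    simp only [pairs, Finset.mem_filter, Finset.mem_product] at hp
    simp only [Finset.mem_erase]
    exact ⟨by rw [← hp.2]; exact (Ne.symm hp.1.2), hp.1.1.2⟩
  · intro j hj
    simp only [Finset.mem_erase] at hj
    simp only [pairs, Finset.mem_filter, Finset.mem_product]
    exact ⟨⟨⟨hi, hj.2⟩, Ne.symm hj.1⟩, trivial⟩
  · intro p hp
    simp only [pairs, Finset.mem_filter] at hp
    rw [← hp.2]
  · intro j hj; rfl
  · intro p hp
    simp only [pairs, Finset.mem_filter] at hp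
    rw [← hp.2]

/-- Splitting the product over all distinct pairs by whether the first coordinate is `i`. -/
lemma prod_pairs_split {ι M : Type*} [DecidableEq ι] [CommMonoid M] (s : Finset ι)
    (i : ι) (hi : i ∈ s) (f : ι × ι → M) :
    ∏ p ∈ pairs s, f p =
      (∏ j ∈ s.erase i, f (i, j)) * ∏ p ∈ (pairs s).filter (fun p => p.1 ≠ i), f p := by
  rw [← prod_pairs_fst_eq s i hi f, Finset.prod_filter_mul_prod_filter_not]

/-- Lagrange interpolation at 0. -/
lemma lagrange_at_zero {F : Type*} [Field F] {ι : Type*} [DecidableEq ι] (s : Finset ι)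
    (hs : s.Nonempty) (v : ι → F) (hv : Set.InjOn v s) :
    ∑ i ∈ s, ∏ j ∈ s.erase i, (v j * (v j - v i)⁻¹) = 1 := by
  have h := Lagrange.sum_basis hv hs
  have h2 := congrArg (Polynomial.eval (0 : F)) h
  rw [Polynomial.eval_finset_sum, Polynomial.eval_one] at h2
  rw [← h2]
  apply Finset.sum_congr rfl
  intro i _
  rw [Lagrange.basis, Polynomial.eval_prod]
  apply Finset.prod_congr rfl
  intro j hj
  rw [Lagrange.basisDivisor]
  simp only [Polynomial.eval_mul, Polynomial.eval_sub, Polynomial.eval_X, Polynomial.eval_C]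
  rw [zero_sub, show v i - v j = -(v j - v i) by ring, inv_neg]
  ring

/-- Cleared-denominator form of the Lagrange identity. -/
lemma cleared_identity {F : Type*} [Field F] {ι : Type*} [DecidableEq ι] (s : Finset ι)
    (hs : s.Nonempty) (v : ι → F) (hv : Set.InjOn v s) :
    ∏ p ∈ pairs s, (v p.2 - v p.1) =
      ∑ i ∈ s, (∏ j ∈ s.erase i, v j) *
        ∏ p ∈ (pairs s).filter (fun p => p.1 ≠ i), (v p.2 - v p.1) := by
  have hL := lagrange_at_zero s hs v hv
  have key : ∀ i ∈ s,
      (∏ j ∈ s.erase i, (v j * (v j - v i)⁻¹)) * ∏ p ∈ pairs s, (v p.2 - v p.1)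
        = (∏ j ∈ s.erase i, v j) *
          ∏ p ∈ (pairs s).filter (fun p => p.1 ≠ i), (v p.2 - v p.1) := by
    intro i hi
    rw [prod_pairs_split s i hi (fun p => v p.2 - v p.1)]
    have hinv : (∏ j ∈ s.erase i, (v j - v i)⁻¹) * (∏ j ∈ s.erase i, (v j - v i)) = 1 := by
      rw [← Finset.prod_mul_distrib]
      apply Finset.prod_eq_one
      intro j hj
      rw [Finset.mem_erase] at hj
      have : v j - v i ≠ 0 := sub_ne_zero.mpr (fun h => hj.1 (hv hj.2 hi h))
      exact inv_mul_cancel₀ this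
    rw [Finset.prod_mul_distrib, mul_assoc, ← mul_assoc (∏ j ∈ s.erase i, (v j - v i)⁻¹),
      hinv, one_mul]
  calc ∏ p ∈ pairs s, (v p.2 - v p.1)
      = (∑ i ∈ s, ∏ j ∈ s.erase i, (v j * (v j - v i)⁻¹)) *
        ∏ p ∈ pairs s, (v p.2 - v p.1) := by rw [hL, one_mul]
    _ = ∑ i ∈ s, (∏ j ∈ s.erase i, (v j * (v j - v i)⁻¹)) *
        ∏ p ∈ pairs s, (v p.2 - v p.1) := by rw [Finset.sum_mul]
    _ = _ := Finset.sum_congr rfl key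

lemma mv_id (N : ℕ) (s : Finset (Fin N)) (hs : s.Nonempty) :
    (∏ p ∈ pairs s, (MvPolynomial.X p.2 - MvPolynomial.X p.1 : MvPolynomial (Fin N) ℚ)) =
      ∑ i ∈ s, (∏ j ∈ s.erase i, MvPolynomial.X j) *
        ∏ p ∈ (pairs s).filter (fun p => p.1 ≠ i),
          (MvPolynomial.X p.2 - MvPolynomial.X p.1) := by
  set K := FractionRing (MvPolynomial (Fin N) ℚ)
  have hinj : Function.Injective (algebraMap (MvPolynomial (Fin N) ℚ) K) :=
    IsFractionRing.injective _ _
  apply hinj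
  rw [map_prod, map_sum]
  simp only [map_mul, map_prod, map_sub]
  have hv : Set.InjOn (fun i => algebraMap (MvPolynomial (Fin N) ℚ) K (MvPolynomial.X i)) s := by
    intro i _ j _ h
    exact MvPolynomial.X_injective (hinj h)
  exact cleared_identity s hs _ hv

lemma isUnit_C (s : Finset (Fin N)) : IsUnit (∏ p ∈ pairs s, Xp (N := N) p.2) := by
  apply IsUnit.of_mul_eq_one (∏ p ∈ pairs s, Xi (N := N) p.2)
  rw [← Finset.prod_mul_distrib]
  exact Finset.prod_eq_one fun p _ => Xp_mul_Xi p.2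

/-- The key Laurent-polynomial identity: `P_s = ∑_{i ∈ s} P_{s,i}`. -/
lemma lp_id (s : Finset (Fin N)) (hs : s.Nonempty) :
    ∏ p ∈ pairs s, (1 - Xp p.1 * Xi p.2) =
      ∑ i ∈ s, ∏ p ∈ (pairs s).filter (fun p => p.1 ≠ i), (1 - Xp p.1 * Xi p.2) := by
  have h := congrArg (MvPolynomial.aeval (Xp (N := N))) (mv_id N s hs)
  simp only [map_prod, map_sum, map_mul, map_sub, MvPolynomial.aeval_X] at h
  have e1 : ∀ (t : Finset (Fin N × Fin N)), ∏ p ∈ t, (Xp (N := N) p.2 - Xp p.1)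
      = (∏ p ∈ t, Xp p.2) * ∏ p ∈ t, (1 - Xp p.1 * Xi p.2) := by
    intro t
    rw [← Finset.prod_mul_distrib]
    exact Finset.prod_congr rfl fun p _ => XpXi_factor p.1 p.2
  rw [e1] at h
  have e2 : ∀ i ∈ s, (∏ j ∈ s.erase i, Xp (N := N) j) *
      ∏ p ∈ (pairs s).filter (fun p => p.1 ≠ i), (Xp p.2 - Xp p.1)
      = (∏ p ∈ pairs s, Xp p.2) *
        ∏ p ∈ (pairs s).filter (fun p => p.1 ≠ i), (1 - Xp p.1 * Xi p.2) := by
    intro i hi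
    rw [e1, prod_pairs_split s i hi (fun p => Xp (N := N) p.2), mul_assoc]
  rw [Finset.sum_congr rfl e2, ← Finset.mul_sum] at h
  exact (isUnit_C s).mul_left_cancel h

/-- Good's recurrence. -/
lemma good_rec (s : Finset (Fin N)) (hs : s.Nonempty) (a : Fin N → ℕ)
    (ha : ∀ i ∈ s, 1 ≤ a i) :
    ∏ p ∈ pairs s, (1 - Xp p.1 * Xi p.2) ^ a p.1 =
      ∑ i ∈ s, ∏ p ∈ pairs s, (1 - Xp p.1 * Xi p.2) ^ (Function.update a i (a i - 1) p.1) := by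
  classical
  have key : ∀ i ∈ s, ∏ p ∈ pairs s, (1 - Xp (N := N) p.1 * Xi p.2) ^
      (Function.update a i (a i - 1) p.1)
      = (∏ p ∈ pairs s, (1 - Xp p.1 * Xi p.2) ^ (a p.1 - 1)) *
        ∏ p ∈ (pairs s).filter (fun p => p.1 ≠ i), (1 - Xp p.1 * Xi p.2) := by
    intro i hi
    rw [Finset.prod_filter, ← Finset.prod_mul_distrib]
    apply Finset.prod_congr rfl
    intro p hp
    have hp1 : p.1 ∈ s := by
      simp only [pairs, Finset.mem_filter, Finset.mem_product] at hp
      exact hp.1.1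
    by_cases hpi : p.1 = i
    · rw [Function.update_apply, if_pos hpi, if_neg (by simp [hpi]), mul_one, hpi]
    · rw [Function.update_apply, if_neg hpi, if_pos hpi, ← pow_succ]
      congr 1
      have := ha p.1 hp1
      omega
  have lhs : ∏ p ∈ pairs s, (1 - Xp (N := N) p.1 * Xi p.2) ^ a p.1
      = (∏ p ∈ pairs s, (1 - Xp p.1 * Xi p.2) ^ (a p.1 - 1)) *
        ∏ p ∈ pairs s, (1 - Xp p.1 * Xi p.2) := by
    rw [← Finset.prod_mul_distrib]
    apply Finset.prod_congr rfl
    intro p hp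
    have hp1 : p.1 ∈ s := by
      simp only [pairs, Finset.mem_filter, Finset.mem_product] at hp
      exact hp.1.1
    rw [← pow_succ]
    congr 1
    have := ha p.1 hp1
    omega
  rw [lhs, lp_id s hs, Finset.mul_sum]
  exact Finset.sum_congr rfl fun i hi => (key i hi).symm

lemma CT_one : CT (1 : LP N) = 1 := by
  rw [CT, AddMonoidAlgebra.one_def, AddMonoidAlgebra.coeff_single, Finsupp.single_eq_same]

lemma zero_case (s : Finset (Fin N)) (k : Fin N) (hk : k ∈ s) (a : Fin N → ℕ)
    (hak : a k = 0) :
    CT (∏ p ∈ pairs s, (1 - Xp p.1 * Xi p.2) ^ a p.1) =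
      CT (∏ p ∈ pairs (s.erase k), (1 - Xp p.1 * Xi p.2) ^ a p.1) := by
  classical
  set f : Fin N × Fin N → LP N := fun p => (1 - Xp p.1 * Xi p.2) ^ a p.1 with hf
  have split1 : ∏ p ∈ pairs s, f p =
      (∏ p ∈ (pairs s).filter (fun p => p.1 = k), f p) *
      ∏ p ∈ (pairs s).filter (fun p => ¬ p.1 = k), f p :=
    (Finset.prod_filter_mul_prod_filter_not _ _ _).symm
  have split2 : ∏ p ∈ (pairs s).filter (fun p => ¬ p.1 = k), f p =
      (∏ p ∈ ((pairs s).filter (fun p => ¬ p.1 = k)).filter (fun p => p.2 = k), f p) *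
      ∏ p ∈ ((pairs s).filter (fun p => ¬ p.1 = k)).filter (fun p => ¬ p.2 = k), f p :=
    (Finset.prod_filter_mul_prod_filter_not _ _ _).symm
  have h1 : ∏ p ∈ (pairs s).filter (fun p => p.1 = k), f p = 1 := by
    apply Finset.prod_eq_one
    intro p hp
    rw [Finset.mem_filter] at hp
    rw [hf]
    simp only [hp.2, hak, pow_zero]
  have hset : ((pairs s).filter (fun p => ¬ p.1 = k)).filter (fun p => ¬ p.2 = k) =
      pairs (s.erase k) := by
    ext p
    simp only [pairs, Finset.mem_filter, Finset.mem_product, Finset.mem_erase]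
    tauto
  have hG : KF k (∏ p ∈ pairs (s.erase k), f p) := by
    apply KF_prod
    intro p hp
    simp only [pairs, Finset.mem_filter, Finset.mem_product, Finset.mem_erase] at hp
    exact KF_pow (KF_factor hp.1.1.1 hp.1.2.1) _
  have hE : Q k (∏ p ∈ ((pairs s).filter (fun p => ¬ p.1 = k)).filter (fun p => p.2 = k), f p) := by
    apply Q_prod
    intro p hp
    simp only [Finset.mem_filter] at hp
    have h2 : p.2 = k := hp.2
    simp only [hf, h2]
    exact Q_pow (Q_factor hp.1.2) _
  rw [split1, h1, one_mul, split2, hset, mul_comm]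
  exact CT_mul_Q hG hE

lemma main_lemma : ∀ (m : ℕ) (s : Finset (Fin N)) (a : Fin N → ℕ),
    (∑ i ∈ s, a i) + s.card = m →
    CT (∏ p ∈ pairs s, (1 - Xp p.1 * Xi p.2) ^ a p.1) =
      (Nat.factorial (∑ i ∈ s, a i) : ℚ) / ∏ i ∈ s, (Nat.factorial (a i) : ℚ) := by
  intro m
  induction m using Nat.strong_induction_on with
  | _ m ih =>
    intro s a hm
    by_cases hz : ∃ k ∈ s, a k = 0
    · obtain ⟨k, hk, hak⟩ := hz
      rw [zero_case s k hk a hak]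
      have hsum : ∑ i ∈ s.erase k, a i = ∑ i ∈ s, a i := by
        rw [← Finset.add_sum_erase s a hk, hak, zero_add]
      have hcard : (s.erase k).card = s.card - 1 := Finset.card_erase_of_mem hk
      have hcard' : 1 ≤ s.card := Finset.card_pos.mpr ⟨k, hk⟩
      have hlt : (∑ i ∈ s.erase k, a i) + (s.erase k).card < m := by omega
      rw [ih _ hlt (s.erase k) a rfl, hsum]
      congr 1
      rw [← Finset.mul_prod_erase s _ hk, hak]
      simp [Nat.factorial]
    · push_neg at hz
      rcases Finset.eq_empty_or_nonempty s with rfl | hs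
      · simp [pairs, CT_one]
      · have ha : ∀ i ∈ s, 1 ≤ a i := fun i hi => Nat.one_le_iff_ne_zero.mpr (hz i hi)
        rw [good_rec s hs a ha]
        have hCT : CT (∑ i ∈ s, ∏ p ∈ pairs s,
            (1 - Xp p.1 * Xi p.2) ^ (Function.update a i (a i - 1) p.1)) =
            ∑ i ∈ s, CT (∏ p ∈ pairs s,
              (1 - Xp p.1 * Xi p.2) ^ (Function.update a i (a i - 1) p.1)) := by
          rw [CT]
          rw [AddMonoidAlgebra.coeff_sum, Finset.sum_apply']
          rfl
        rw [hCT]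
        set T := ∑ i ∈ s, a i with hT
        obtain ⟨k, hk⟩ := hs
        have hT1 : 1 ≤ T := le_trans (ha k hk) (Finset.single_le_sum (f := a) (fun i _ => Nat.zero_le _) hk)
        have hterm : ∀ i ∈ s, CT (∏ p ∈ pairs s,
            (1 - Xp p.1 * Xi p.2) ^ (Function.update a i (a i - 1) p.1)) =
            (Nat.factorial (T - 1) : ℚ) /
              ∏ j ∈ s, (Nat.factorial (Function.update a i (a i - 1) j) : ℚ) := by
          intro i hi
          have hsum : ∑ j ∈ s, Function.update a i (a i - 1) j = T - 1 := by
            have h1 := Finset.sum_update_of_mem hi a (a i - 1)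
            have h2 : ∑ j ∈ s \ {i}, a j = ∑ j ∈ s.erase i, a j := by
              rw [Finset.sdiff_singleton_eq_erase]
            have h3 : a i + ∑ j ∈ s.erase i, a j = T := Finset.add_sum_erase s a hi
            have h4 := ha i hi
            omega
          have hlt : (∑ j ∈ s, Function.update a i (a i - 1) j) + s.card < m := by
            rw [hsum]; omega
          rw [ih _ hlt s _ rfl, hsum]
        rw [Finset.sum_congr rfl hterm]
        -- now pure arithmetic
        have hPne : (∏ i ∈ s, (Nat.factorial (a i) : ℚ)) ≠ 0 := by
          apply Finset.prod_ne_zero_iff.mpr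
          intro i _
          exact_mod_cast Nat.factorial_ne_zero (a i)
        have hprod : ∀ i ∈ s, (a i : ℚ) * ∏ j ∈ s, (Nat.factorial (Function.update a i (a i - 1) j) : ℚ)
            = ∏ j ∈ s, (Nat.factorial (a j) : ℚ) := by
          intro i hi
          rw [← Finset.mul_prod_erase s (fun j => (Nat.factorial (Function.update a i (a i - 1) j) : ℚ)) hi,
            ← Finset.mul_prod_erase s (fun j => (Nat.factorial (a j) : ℚ)) hi]
          have he : ∏ j ∈ s.erase i, (Nat.factorial (Function.update a i (a i - 1) j) : ℚ)
              = ∏ j ∈ s.erase i, (Nat.factorial (a j) : ℚ) := by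
            apply Finset.prod_congr rfl
            intro j hj
            rw [Function.update_of_ne (Finset.mem_erase.mp hj).1]
          rw [he, Function.update_self, ← mul_assoc]
          congr 1
          rw [← Nat.cast_mul, Nat.mul_factorial_pred (Nat.pos_iff_ne_zero.mp (Nat.lt_of_lt_of_le Nat.zero_lt_one (ha i hi)))]
        have hterm2 : ∀ i ∈ s, (Nat.factorial (T - 1) : ℚ) /
            ∏ j ∈ s, (Nat.factorial (Function.update a i (a i - 1) j) : ℚ)
            = ((a i : ℚ) * (Nat.factorial (T - 1) : ℚ)) / ∏ j ∈ s, (Nat.factorial (a j) : ℚ) := by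
          intro i hi
          have hQne : (∏ j ∈ s, (Nat.factorial (Function.update a i (a i - 1) j) : ℚ)) ≠ 0 := by
            apply Finset.prod_ne_zero_iff.mpr
            intro j _
            exact_mod_cast Nat.factorial_ne_zero _
          rw [div_eq_div_iff hQne hPne, ← hprod i hi]
          ring
        rw [Finset.sum_congr rfl hterm2, ← Finset.sum_div, ← Finset.sum_mul]
        have : (∑ i ∈ s, (a i : ℚ)) = (T : ℚ) := by rw [hT]; push_cast; rfl
        rw [this]
        congr 1
        rw [← Nat.cast_mul, Nat.mul_factorial_pred (by omega)]


/-- Dyson's conjecture (Theorem 1.2):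
`CT_x ∏_{0≤i≠j≤n} (1 - x_i/x_j)^{a_i} = (a_0+⋯+a_n)!/(a_0!⋯a_n!)`. -/
theorem stmt15 (n : ℕ) (a : Fin (n + 1) → ℕ) :
    CT (∏ p ∈ Finset.univ.filter (fun p : Fin (n + 1) × Fin (n + 1) => p.1 ≠ p.2),
        (1 - Xp p.1 * Xi p.2) ^ a p.1) =
      (Nat.factorial (∑ i, a i) : ℚ) / ∏ i, (Nat.factorial (a i) : ℚ) := by
  have hp : pairs (Finset.univ : Finset (Fin (n + 1))) =
      Finset.univ.filter (fun p : Fin (n + 1) × Fin (n + 1) => p.1 ≠ p.2) := by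
    rw [pairs, Finset.univ_product_univ]
  rw [← hp]
  exact main_lemma _ Finset.univ a rfl
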